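/- If the weight function w(i,j) is positive and increasing as a function of j (for each fixed i), then the minimal cost function b is non-decreasing: b(n-1) ≤ b(n) for all n ≥ 2. -/
import Mathlib


/-- Minimal cost `b(n)` of a jumping pattern from `n` down to `1`:
`b(1)=0` and `b(n) = min_{1 <= k < n} (w(k,n) + b(k))`. -/
noncomputable def minCost (w : ℕ → ℕ → ℝ) : ℕ → ℝ
  | 0 => 0
  | 1 => 0
  | (n+2) =>
    ((Finset.Icc 1 (n+1)).attach).inf'
      ⟨⟨1, by simp⟩, Finset.mem_attach _ _⟩
      (fun k => w k.1 (n+2) + minCost w k.1)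
decreasing_by
  have := Finset.mem_Icc.mp k.2; omega

/-- The lexicographically-first cost-minimizing jump sequence. -/
noncomputable def jumpSeq (w : ℕ → ℕ → ℝ) : ℕ → ℕ := fun n =>
  if n ≤ 1 then 1
  else sInf {k | 1 ≤ k ∧ k < n ∧ w k n + minCost w k = minCost w n}

lemma minCost_le (w : ℕ → ℕ → ℝ) (n k : ℕ) (hk1 : 1 ≤ k) (hk2 : k ≤ n + 1) :
    minCost w (n + 2) ≤ w k (n + 2) + minCost w k := by
  rw [minCost]
  exact Finset.inf'_le _ (Finset.mem_attach _ ⟨k, Finset.mem_Icc.mpr ⟨hk1, hk2⟩⟩)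

lemma minCost_exists (w : ℕ → ℕ → ℝ) (n : ℕ) :
    ∃ k, 1 ≤ k ∧ k ≤ n + 1 ∧ minCost w (n + 2) = w k (n + 2) + minCost w k := by
  rw [minCost]
  obtain ⟨k, _, hk⟩ := Finset.exists_mem_eq_inf'
    (⟨⟨1, by simp⟩, Finset.mem_attach _ _⟩ :
      ((Finset.Icc 1 (n+1)).attach).Nonempty)
    (fun k => w k.1 (n+2) + minCost w k.1)
  have := Finset.mem_Icc.mp k.2
  exact ⟨k.1, this.1, this.2, hk⟩

theorem stmt_1 (w : ℕ → ℕ → ℝ)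
    (hpos : ∀ i j, 1 ≤ i → i < j → 0 < w i j)
    (hmono : ∀ i j j', 1 ≤ i → i < j → j < j' → w i j < w i j') :
    ∀ n, 2 ≤ n → minCost w (n - 1) ≤ minCost w n := by
  intro n hn
  obtain ⟨m, rfl⟩ : ∃ m, n = m + 2 := ⟨n - 2, by omega⟩
  have hsub : m + 2 - 1 = m + 1 := by omega
  rw [hsub]
  obtain ⟨k, hk1, hk2, hkeq⟩ := minCost_exists w m
  rcases eq_or_lt_of_le hk2 with h | h
  · -- k = m+1
    subst h
    rw [hkeq]
    have := hpos (m + 1) (m + 2) hk1 (by omega)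
    linarith
  · -- k ≤ m
    obtain ⟨p, rfl⟩ : ∃ p, m = p + 1 := ⟨m - 1, by omega⟩
    have h1 : minCost w (p + 2) ≤ w k (p + 2) + minCost w k :=
      minCost_le w p k hk1 (by omega)
    have h2 : w k (p + 2) < w k (p + 3) := hmono k (p + 2) (p + 3) hk1 (by omega) (by omega)
    rw [hkeq]
    calc minCost w (p + 2) ≤ w k (p + 2) + minCost w k := h1
      _ ≤ w k (p + 1 + 2) + minCost w k := by
          have : p + 1 + 2 = p + 3 := by ring
          rw [this]; linarith
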